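/- On the hyperbolic half-plane H² = {(x,y) ∈ ℝ² : y > 0} with metric g = (dx² + dy²)/y², the functions f₁(x,y) = -(λ - c₂) ln y and f₂(x,y) = -(√(c₁(λ - c₂))/c₁) ln y satisfy the gradient generalised Ricci soliton equation Hess f₁ = -c₁ df₂ ⊙ df₂ + c₂ Ric + λ g, provided c₁(λ - c₂) > 0. -/

import Mathlib

noncomputable section
open scoped BigOperators

/-- Partial derivative of `f` in direction `i` at `x`. -/
def pd {n : ℕ} (i : Fin n) (f : (Fin n → ℝ) → ℝ) (x : Fin n → ℝ) : ℝ :=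
  fderiv ℝ f x (Pi.single i 1)

/-- Christoffel symbols `Γ^k_{ij}` of the metric `g` (given as a matrix field). -/
def christoffel {n : ℕ} (g : (Fin n → ℝ) → Matrix (Fin n) (Fin n) ℝ)
    (k i j : Fin n) (x : Fin n → ℝ) : ℝ :=
  (1 / 2) * ∑ l, (g x)⁻¹ k l *
    (pd i (fun y => g y j l) x + pd j (fun y => g y i l) x - pd l (fun y => g y i j) x)

/-- Components of the Riemannian Hessian of `f`. -/
def hessian {n : ℕ} (g : (Fin n → ℝ) → Matrix (Fin n) (Fin n) ℝ)
    (f : (Fin n → ℝ) → ℝ) (i j : Fin n) (x : Fin n → ℝ) : ℝ :=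
  pd i (pd j f) x - ∑ k, christoffel g k i j x * pd k f x

/-- Components `R^l_{ijk}` of the Riemann curvature tensor. -/
def riemCurv {n : ℕ} (g : (Fin n → ℝ) → Matrix (Fin n) (Fin n) ℝ)
    (l i j k : Fin n) (x : Fin n → ℝ) : ℝ :=
  pd i (christoffel g l j k) x - pd j (christoffel g l i k) x
    + ∑ m, christoffel g l i m x * christoffel g m j k x
    - ∑ m, christoffel g l j m x * christoffel g m i k x

/-- Components of the Ricci tensor. -/
def ricciT {n : ℕ} (g : (Fin n → ℝ) → Matrix (Fin n) (Fin n) ℝ)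
    (j k : Fin n) (x : Fin n → ℝ) : ℝ :=
  ∑ i, riemCurv g i i j k x

lemma pd_congr {n : ℕ} {f f' : (Fin n → ℝ) → ℝ} {x : Fin n → ℝ}
    (h : f =ᶠ[nhds x] f') (i : Fin n) : pd i f x = pd i f' x := by
  unfold pd; rw [Filter.EventuallyEq.fderiv_eq h]

lemma pd_single {n : ℕ} (h : ℝ → ℝ) (j : Fin n) (x : Fin n → ℝ)
    (hd : DifferentiableAt ℝ h (x j)) (i : Fin n) :
    pd i (fun y => h (y j)) x = deriv h (x j) * (Pi.single i 1 : Fin n → ℝ) j := by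
  unfold pd
  have heq : (fun y : Fin n → ℝ => h (y j))
      = h ∘ (ContinuousLinearMap.proj j : (Fin n → ℝ) →L[ℝ] ℝ) := rfl
  rw [heq, fderiv_comp x hd ((ContinuousLinearMap.proj j (R := ℝ) (φ := fun _ : Fin n => ℝ))).differentiableAt]
  rw [ContinuousLinearMap.fderiv]
  simp only [ContinuousLinearMap.coe_comp', Function.comp_apply, ContinuousLinearMap.proj_apply]
  rw [show (Pi.single i 1 : Fin n → ℝ) j = ((Pi.single i 1 : Fin n → ℝ) j) • (1:ℝ) by simp, map_smul]
  simp [fderiv_apply_one_eq_deriv, mul_comm]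

/-- christoffel index constants -/
def gam (k i j : Fin 2) : ℝ :=
  -((if i = 1 ∧ j = k then (1:ℝ) else 0) + (if j = 1 ∧ i = k then 1 else 0)
    - (if k = 1 ∧ i = j then 1 else 0))

section hyp
variable (g : (Fin 2 → ℝ) → Matrix (Fin 2) (Fin 2) ℝ)
    (hg : ∀ x, g x = ((x 1) ^ 2)⁻¹ • (1 : Matrix (Fin 2) (Fin 2) ℝ))

include hg

lemma ginv (x : Fin 2 → ℝ) (hx : x 1 ≠ 0) :
    (g x)⁻¹ = ((x 1) ^ 2) • (1 : Matrix (Fin 2) (Fin 2) ℝ) := by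
  apply Matrix.inv_eq_right_inv
  rw [hg]
  rw [Matrix.smul_mul, Matrix.mul_smul, Matrix.one_mul, smul_smul]
  rw [inv_mul_cancel₀ (by positivity), one_smul]

lemma pd_g (i j l : Fin 2) (x : Fin 2 → ℝ) (hx : x 1 ≠ 0) :
    pd i (fun y => g y j l) x
      = (-(2 * x 1) / ((x 1) ^ 2) ^ 2) * (if j = l then 1 else 0)
        * (Pi.single i 1 : Fin 2 → ℝ) 1 := by
  have heq : (fun y => g y j l)
      = fun y : Fin 2 → ℝ => (fun t : ℝ => (t ^ 2)⁻¹ * (if j = l then (1:ℝ) else 0)) (y 1) := by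
    funext y; rw [hg]; simp [Matrix.smul_apply, Matrix.one_apply]
  have hd : DifferentiableAt ℝ (fun t : ℝ => (t ^ 2)⁻¹ * (if j = l then (1:ℝ) else 0)) (x 1) :=
    ((differentiableAt_pow 2).inv (by positivity)).mul_const _
  rw [heq, pd_single _ 1 x hd]
  · congr 1
    have : deriv (fun t : ℝ => (t ^ 2)⁻¹ * (if j = l then (1:ℝ) else 0)) (x 1)
        = (-(2 * x 1) / ((x 1) ^ 2) ^ 2) * (if j = l then (1:ℝ) else 0) := by
      rw [deriv_mul_const]
      · congr 1
        rw [deriv_fun_inv'' (by exact differentiableAt_pow 2) (by positivity)]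
        simp [deriv_pow_field]
      · exact (differentiableAt_pow 2).inv (by positivity)
    rw [this]

lemma christoffel_eq (k i j : Fin 2) (x : Fin 2 → ℝ) (hx : x 1 ≠ 0) :
    christoffel g k i j x = gam k i j * (x 1)⁻¹ := by
  unfold christoffel
  rw [ginv g hg x hx]
  rw [Fin.sum_univ_two]
  rw [pd_g g hg i j 0 x hx, pd_g g hg j i 0 x hx, pd_g g hg 0 i j x hx,
      pd_g g hg i j 1 x hx, pd_g g hg j i 1 x hx, pd_g g hg 1 i j x hx]
  fin_cases i <;> fin_cases j <;> fin_cases k <;>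
    simp [gam, Matrix.smul_apply, Matrix.one_apply, Pi.single_apply] <;>
    field_simp <;> ring

lemma pd_christoffel (m k i j : Fin 2) (x : Fin 2 → ℝ) (hx : 0 < x 1) :
    pd m (christoffel g k i j) x
      = gam k i j * (-((x 1) ^ 2)⁻¹) * (Pi.single m 1 : Fin 2 → ℝ) 1 := by
  have hev : christoffel g k i j
      =ᶠ[nhds x] fun y : Fin 2 → ℝ => (fun t : ℝ => gam k i j * t⁻¹) (y 1) := by
    have hopen : IsOpen {y : Fin 2 → ℝ | 0 < y 1} :=
      isOpen_lt continuous_const (continuous_apply 1)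
    filter_upwards [hopen.mem_nhds hx] with y hy
    exact christoffel_eq g hg k i j y (ne_of_gt hy)
  have hd : DifferentiableAt ℝ (fun t : ℝ => gam k i j * t⁻¹) (x 1) :=
    (differentiableAt_inv (ne_of_gt hx)).const_mul _
  rw [pd_congr hev, pd_single _ 1 x hd]
  congr 1
  rw [deriv_const_mul _ (differentiableAt_inv (ne_of_gt hx))]
  simp [deriv_inv]

lemma ricciT_eq (i j : Fin 2) (x : Fin 2 → ℝ) (hx : 0 < x 1) :
    ricciT g i j x = -((x 1) ^ 2)⁻¹ * (if i = j then 1 else 0) := by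
  have hx' := ne_of_gt hx
  unfold ricciT riemCurv
  simp only [Fin.sum_univ_two]
  rw [pd_christoffel g hg _ _ _ _ x hx, pd_christoffel g hg _ _ _ _ x hx,
      pd_christoffel g hg _ _ _ _ x hx, pd_christoffel g hg _ _ _ _ x hx]
  repeat rw [christoffel_eq g hg _ _ _ x hx']
  fin_cases i <;> fin_cases j <;>
    simp [gam, Pi.single_apply] <;> field_simp <;> ring

end hyp

section logs

lemma pd_log (c : ℝ) (f : (Fin 2 → ℝ) → ℝ) (hf : ∀ x, f x = c * Real.log (x 1))
    (i : Fin 2) (x : Fin 2 → ℝ) (hx : x 1 ≠ 0) :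
    pd i f x = c * (x 1)⁻¹ * (Pi.single i 1 : Fin 2 → ℝ) 1 := by
  have heq : f = fun y : Fin 2 → ℝ => (fun t => c * Real.log t) (y 1) := funext hf
  have hd : DifferentiableAt ℝ (fun t : ℝ => c * Real.log t) (x 1) :=
    (Real.differentiableAt_log hx).const_mul _
  rw [heq, pd_single _ 1 x hd]
  congr 1
  rw [deriv_const_mul _ (Real.differentiableAt_log hx), Real.deriv_log]

lemma pd_pd_log (c : ℝ) (f : (Fin 2 → ℝ) → ℝ) (hf : ∀ x, f x = c * Real.log (x 1))
    (i j : Fin 2) (x : Fin 2 → ℝ) (hx : 0 < x 1) :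
    pd i (pd j f) x = (c * (Pi.single j 1 : Fin 2 → ℝ) 1) * (-((x 1) ^ 2)⁻¹)
      * (Pi.single i 1 : Fin 2 → ℝ) 1 := by
  have hev : pd j f =ᶠ[nhds x]
      fun y : Fin 2 → ℝ =>
        (fun t : ℝ => (c * (Pi.single j 1 : Fin 2 → ℝ) 1) * t⁻¹) (y 1) := by
    have hopen : IsOpen {y : Fin 2 → ℝ | 0 < y 1} :=
      isOpen_lt continuous_const (continuous_apply 1)
    filter_upwards [hopen.mem_nhds hx] with y hy
    rw [pd_log c f hf j y (ne_of_gt hy)]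
    ring
  have hd : DifferentiableAt ℝ
      (fun t : ℝ => (c * (Pi.single j 1 : Fin 2 → ℝ) 1) * t⁻¹) (x 1) :=
    (differentiableAt_inv (ne_of_gt hx)).const_mul _
  rw [pd_congr hev, pd_single _ 1 x hd]
  congr 1
  rw [deriv_const_mul _ (differentiableAt_inv (ne_of_gt hx))]
  simp [deriv_inv]

end logs

theorem hyperbolic_generalised_ricci_soliton (c₁ c₂ lam : ℝ) (hc : c₁ * (lam - c₂) > 0)
    (g : (Fin 2 → ℝ) → Matrix (Fin 2) (Fin 2) ℝ)
    (hg : ∀ x, g x = ((x 1) ^ 2)⁻¹ • (1 : Matrix (Fin 2) (Fin 2) ℝ))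
    (f₁ f₂ : (Fin 2 → ℝ) → ℝ)
    (hf₁ : ∀ x, f₁ x = -(lam - c₂) * Real.log (x 1))
    (hf₂ : ∀ x, f₂ x = -(Real.sqrt (c₁ * (lam - c₂)) / c₁) * Real.log (x 1)) :
    ∀ x : Fin 2 → ℝ, 0 < x 1 → ∀ i j : Fin 2,
      hessian g f₁ i j x =
        -c₁ * (pd i f₂ x * pd j f₂ x) + c₂ * ricciT g i j x + lam * g x i j := by
  intro x hx i j
  have hx' : x 1 ≠ 0 := ne_of_gt hx
  have hc1 : c₁ ≠ 0 := left_ne_zero_of_mul (ne_of_gt hc)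
  have hs : Real.sqrt (c₁ * (lam - c₂)) * Real.sqrt (c₁ * (lam - c₂)) = c₁ * (lam - c₂) :=
    Real.mul_self_sqrt hc.le
  unfold hessian
  rw [Fin.sum_univ_two]
  rw [pd_pd_log _ f₁ hf₁ i j x hx,
      pd_log _ f₁ hf₁ 0 x hx', pd_log _ f₁ hf₁ 1 x hx',
      pd_log _ f₂ hf₂ i x hx', pd_log _ f₂ hf₂ j x hx',
      christoffel_eq g hg 0 i j x hx', christoffel_eq g hg 1 i j x hx',
      ricciT_eq g hg i j x hx, hg x]
  fin_cases i <;> fin_cases j <;>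
    simp [gam, Pi.single_apply, Matrix.smul_apply, Matrix.one_apply] <;>
    field_simp
  all_goals linarith [Real.sq_sqrt hc.le]
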